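/- Let k ≥ 3 and G = C(2k+1; {1,3}), and let e = v_1 v_4 (a chord edge). Then U = {v_2} ∪ {v_{2i+1} : 2 ≤ i ≤ k} is a vertex cut of G−e with |U| = k and c((G−e)−U) = k−1; consequently τ(G−e) ≤ k/(k−1). -/

import Mathlib

open SimpleGraph

def circGraph (n : ℕ) (s : Set (ZMod n)) : SimpleGraph (ZMod n) where
  Adj i j := i ≠ j ∧ (i - j ∈ s ∨ j - i ∈ s)
  symm := ⟨fun i j h => ⟨h.1.symm, h.2.symm⟩⟩
  loopless := ⟨fun i h => h.1 rfl⟩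

/-- Number of connected components of `G - S`. -/
noncomputable def numComp {V : Type*} (G : SimpleGraph V) (S : Set V) : ℕ :=
  Nat.card ((G.induce Sᶜ).ConnectedComponent)

/-- `S` is a vertex cut: removing `S` leaves a disconnected graph. -/
def IsVertexCut {V : Type*} (G : SimpleGraph V) (S : Set V) : Prop :=
  1 < numComp G S

/-- Toughness: minimum of |S| / c(G - S) over vertex cuts `S`. -/
noncomputable def toughness {V : Type*} (G : SimpleGraph V) : ℝ :=
  sInf {x : ℝ | ∃ S : Set V, IsVertexCut G S ∧ x = (S.ncard : ℝ) / (numComp G S : ℝ)}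

def MinimallyTough {V : Type*} (G : SimpleGraph V) (t : ℝ) : Prop :=
  toughness G = t ∧ ∀ e ∈ G.edgeSet, toughness (G.deleteEdges {e}) < t

namespace Stmt6Aux

variable {k : ℕ}

instance (k : ℕ) : NeZero (2*k+1) := ⟨by omega⟩

abbrev Gd (k : ℕ) : SimpleGraph (ZMod (2*k+1)) := circGraph (2*k+1) {1, 3}

abbrev Gd' (k : ℕ) : SimpleGraph (ZMod (2*k+1)) :=
  (Gd k).deleteEdges {s(((1 : ℕ) : ZMod (2*k+1)), ((4 : ℕ) : ZMod (2*k+1)))}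

abbrev Ud (k : ℕ) : Set (ZMod (2*k+1)) :=
  {v | v = ((2 : ℕ) : ZMod (2*k+1)) ∨
    ∃ i : ℕ, 2 ≤ i ∧ i ≤ k ∧ v = ((2*i+1 : ℕ) : ZMod (2*k+1))}

lemma circ_adj (n : ℕ) (s : Set (ZMod n)) (i j : ZMod n) :
    (circGraph n s).Adj i j ↔ i ≠ j ∧ (i - j ∈ s ∨ j - i ∈ s) := Iff.rfl

lemma val_of_eq {a : ℕ} {v : ZMod (2*k+1)} (h : v.val = a) (ha : a < 2*k+1) :
    v = ((a : ℕ) : ZMod (2*k+1)) := by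
  have := (ZMod.natCast_zmod_val v).symm
  rw [h] at this; exact this

lemma val_cast' {a : ℕ} (ha : a < 2*k+1) : ((a : ℕ) : ZMod (2*k+1)).val = a := by
  rw [ZMod.val_natCast, Nat.mod_eq_of_lt ha]

lemma cast_ne {a b : ℕ} (ha : a < 2*k+1) (hb : b < 2*k+1) (h : a ≠ b) :
    ((a : ℕ) : ZMod (2*k+1)) ≠ ((b : ℕ) : ZMod (2*k+1)) := by
  intro he
  exact h (by rw [← val_cast' ha, he, val_cast' hb])

lemma val_add (v : ZMod (2*k+1)) (d : ℕ) :
    (v + (d : ZMod (2*k+1))).val = (v.val + d) % (2*k+1) := by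
  have h : v + (d : ZMod (2*k+1)) = ((v.val + d : ℕ) : ZMod (2*k+1)) := by
    rw [Nat.cast_add, ZMod.natCast_zmod_val]
  rw [h, ZMod.val_natCast]

lemma mod_small {a n : ℕ} (h : a < 2*n) (hn : 0 < n) :
    a % n = if a < n then a else a - n := by
  split_ifs with h'
  · exact Nat.mod_eq_of_lt h'
  · rw [Nat.mod_eq_sub_mod (le_of_not_gt h'), Nat.mod_eq_of_lt (by omega)]

lemma mem_U_iff (hk : 3 ≤ k) (v : ZMod (2*k+1)) :
    v ∈ Ud k ↔ v.val = 0 ∨ v.val = 2 ∨ (v.val % 2 = 1 ∧ 5 ≤ v.val) := by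
  constructor
  · rintro (rfl | ⟨i, hi2, hik, rfl⟩)
    · right; left; exact val_cast' (by omega)
    · rw [ZMod.val_natCast, mod_small (by omega) (by omega)]
      split_ifs with h
      · right; right; omega
      · left; omega
  · have hv := ZMod.val_lt v
    rintro (h | h | ⟨h1, h2⟩)
    · right; exact ⟨k, by omega, le_refl k, by
        rw [val_of_eq h (by omega)]; norm_num [ZMod.natCast_self]⟩
    · left; exact val_of_eq h (by omega)
    · right
      refine ⟨(v.val - 1) / 2, by omega, by omega, ?_⟩
      have h : 2*((v.val - 1)/2)+1 = v.val := by omega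
      rw [h, ZMod.natCast_zmod_val]

lemma mem_Uc_iff (hk : 3 ≤ k) (v : ZMod (2*k+1)) :
    v ∈ (Ud k)ᶜ ↔ v.val = 1 ∨ v.val = 3 ∨ (v.val % 2 = 0 ∧ 4 ≤ v.val) := by
  rw [Set.mem_compl_iff, mem_U_iff hk]
  have := ZMod.val_lt v
  omega

/-- component classifier -/
def f (v : ZMod (2*k+1)) : ℕ :=
  if v.val = 1 then 0 else if v.val ≤ 6 then 1 else v.val / 2 - 2

lemma f_lt (hk : 3 ≤ k) {v : ZMod (2*k+1)} (hv : v ∈ (Ud k)ᶜ) : f v < k - 1 := by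
  rw [mem_Uc_iff hk] at hv
  have := ZMod.val_lt v
  unfold f
  split_ifs <;> omega

end Stmt6Aux

namespace Stmt6Aux

lemma step (hk : 3 ≤ k) {u v : ZMod (2*k+1)} (hu : u ∈ (Ud k)ᶜ) (hv : v ∈ (Ud k)ᶜ)
    (hne : s(u, v) ≠ s(((1 : ℕ) : ZMod (2*k+1)), ((4 : ℕ) : ZMod (2*k+1))))
    {d : ℕ} (hd : d = 1 ∨ d = 3) (heq : u = v + (d : ZMod (2*k+1))) :
    f u = f v := by
  have hval : u.val = (v.val + d) % (2*k+1) := by rw [heq, val_add]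
  have hvlt := ZMod.val_lt v
  have hult := ZMod.val_lt u
  replace hval : u.val = v.val + d ∨ u.val + (2*k+1) = v.val + d := by
    rw [mod_small (by omega) (by omega)] at hval
    split_ifs at hval <;> omega
  rw [mem_Uc_iff hk] at hu hv
  rcases hv with h1 | h3 | ⟨he, h4⟩
  · -- v.val = 1
    rcases hd with rfl | rfl
    · exfalso; omega
    · exfalso
      apply hne
      have hu4 : u.val = 4 := by omega
      rw [val_of_eq hu4 (by omega), val_of_eq h1 (by omega)]
      exact Sym2.eq_swap
  · -- v.val = 3 : u.val = 4 or 6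
    have : u.val = 4 ∨ u.val = 6 := by omega
    unfold f
    rcases this with h | h <;> simp [h, h3]
  · -- v.val even ≥ 4
    exfalso; omega

lemma sub_cases {u v : ZMod (2*k+1)} (h : u - v ∈ ({1, 3} : Set (ZMod (2*k+1)))) :
    ∃ d : ℕ, (d = 1 ∨ d = 3) ∧ u = v + (d : ZMod (2*k+1)) := by
  rcases h with h | h
  · exact ⟨1, Or.inl rfl, by push_cast; rw [← h]; ring⟩
  · refine ⟨3, Or.inr rfl, ?_⟩
    rw [Set.mem_singleton_iff] at h
    push_cast
    rw [← h]; ring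

lemma invar (hk : 3 ≤ k) (a b : ↥(Ud k)ᶜ) (h : ((Gd' k).induce (Ud k)ᶜ).Adj a b) :
    f a.1 = f b.1 := by
  have h' : (Gd' k).Adj a.1 b.1 := h
  rw [SimpleGraph.deleteEdges_adj] at h'
  obtain ⟨hadj, hne⟩ := h'
  rw [Set.mem_singleton_iff] at hne
  rw [circ_adj] at hadj
  rcases hadj.2 with hc | hc
  · obtain ⟨d, hd, heq⟩ := sub_cases hc
    exact step hk a.2 b.2 hne hd heq
  · obtain ⟨d, hd, heq⟩ := sub_cases hc
    exact (step hk b.2 a.2 (by rw [Sym2.eq_swap]; exact hne) hd heq).symm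

end Stmt6Aux

namespace Stmt6Aux

def rep (j : ℕ) : ℕ := if j = 0 then 1 else if j = 1 then 3 else 2*j + 4

lemma rep_lt (hk : 3 ≤ k) {j : ℕ} (hj : j ≤ k - 2) : rep j < 2*k+1 := by
  unfold rep; split_ifs <;> omega

lemma rep_mem (hk : 3 ≤ k) {j : ℕ} (hj : j ≤ k - 2) :
    ((rep j : ℕ) : ZMod (2*k+1)) ∈ (Ud k)ᶜ := by
  rw [mem_Uc_iff hk, val_cast' (rep_lt hk hj)]
  unfold rep; split_ifs <;> omega

lemma f_rep (hk : 3 ≤ k) {j : ℕ} (hj : j ≤ k - 2) :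
    f ((rep j : ℕ) : ZMod (2*k+1)) = j := by
  unfold f
  rw [val_cast' (rep_lt hk hj)]
  unfold rep
  rcases Nat.lt_or_ge j 2 with h | h
  · interval_cases j <;> simp
  · have h0 : ¬ (j = 0) := by omega
    have h1 : ¬ (j = 1) := by omega
    simp only [h0, h1, if_false]
    split_ifs <;> omega

lemma adj_glue (hk : 3 ≤ k) {m : ℕ} (hm : m = 4 ∨ m = 6) :
    (Gd' k).Adj ((3 : ℕ) : ZMod (2*k+1)) ((m : ℕ) : ZMod (2*k+1)) := by
  rw [SimpleGraph.deleteEdges_adj]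
  constructor
  · rw [circ_adj]
    constructor
    · exact cast_ne (by omega) (by omega) (by omega)
    · right
      rcases hm with rfl | rfl
      · left; push_cast; ring_nf
      · right; rw [Set.mem_singleton_iff]; push_cast; ring_nf
  · rw [Set.mem_singleton_iff]
    intro h
    rw [Sym2.eq_iff] at h
    rcases h with ⟨h, -⟩ | ⟨-, h⟩
    · exact cast_ne (k := k) (by omega) (by omega) (by omega) h
    · rcases hm with rfl | rfl
      · exact cast_ne (k := k) (by omega) (by omega) (by omega) h
      · exact cast_ne (k := k) (by omega) (by omega) (by omega) h

lemma walk_const (hk : 3 ≤ k) {v w : ↥(Ud k)ᶜ} (p : ((Gd' k).induce (Ud k)ᶜ).Walk v w) :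
    f v.1 = f w.1 := by
  induction p with
  | nil => rfl
  | cons h _ ih => exact (invar hk _ _ h).trans ih

lemma numComp_eq (hk : 3 ≤ k) : numComp (Gd' k) (Ud k) = k - 1 := by
  have E : ((Gd' k).induce (Ud k)ᶜ).ConnectedComponent ≃ Fin (k - 1) :=
    { toFun := ConnectedComponent.lift (fun v => ⟨f v.1, f_lt hk v.2⟩)
        (fun _ _ p _ => Fin.ext (walk_const hk p))
      invFun := fun j => ((Gd' k).induce (Ud k)ᶜ).connectedComponentMk
        ⟨((rep j.1 : ℕ) : ZMod (2*k+1)), rep_mem hk (by omega)⟩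
      left_inv := by
        intro c
        induction c using ConnectedComponent.ind with
        | _ v =>
          rw [ConnectedComponent.lift_mk]
          obtain ⟨x, hx⟩ := v
          have hx' := hx
          rw [mem_Uc_iff hk] at hx'
          have hxlt := ZMod.val_lt x
          rcases hx' with h1 | h3 | ⟨he, h4⟩
          · -- x.val = 1, f = 0, rep 0 = 1
            apply congrArg
            apply Subtype.ext
            show ((rep (f x) : ℕ) : ZMod (2*k+1)) = x
            have : f x = 0 := by unfold f; simp [h1]
            rw [this]
            exact (val_of_eq h1 (by omega)).symm
          · apply congrArg
            apply Subtype.ext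
            show ((rep (f x) : ℕ) : ZMod (2*k+1)) = x
            have : f x = 1 := by unfold f; simp [h3]
            rw [this]
            exact (val_of_eq h3 (by omega)).symm
          · rcases Nat.lt_or_ge x.val 7 with hlt | hge
            · -- x.val = 4 or 6
              have hm : x.val = 4 ∨ x.val = 6 := by omega
              have hf : f x = 1 := by unfold f; split_ifs <;> omega
              apply ConnectedComponent.sound
              apply SimpleGraph.Adj.reachable
              have hxeq : x = ((x.val : ℕ) : ZMod (2*k+1)) := (ZMod.natCast_zmod_val x).symm
              show ((Gd' k).induce (Ud k)ᶜ).Adj ⟨((rep (f x) : ℕ) : ZMod (2*k+1)), _⟩ ⟨x, hx⟩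
              show (Gd' k).Adj ((rep (f x) : ℕ) : ZMod (2*k+1)) x
              rw [hf]
              show (Gd' k).Adj ((3 : ℕ) : ZMod (2*k+1)) x
              rw [hxeq]
              exact adj_glue hk hm
            · -- x.val even ≥ 8
              apply congrArg
              apply Subtype.ext
              show ((rep (f x) : ℕ) : ZMod (2*k+1)) = x
              have hf : f x = x.val / 2 - 2 := by unfold f; split_ifs <;> omega
              rw [hf]
              have : rep (x.val / 2 - 2) = x.val := by unfold rep; split_ifs <;> omega
              rw [this]
              exact ZMod.natCast_zmod_val x
      right_inv := by
        intro j
        rw [ConnectedComponent.lift_mk]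
        exact Fin.ext (f_rep hk (by omega)) }
  unfold numComp
  exact Nat.card_eq_of_equiv_fin E

end Stmt6Aux

namespace Stmt6Aux

lemma ncard_U (hk : 3 ≤ k) : (Ud k).ncard = k := by
  have hUeq : Ud k = insert ((2 : ℕ) : ZMod (2*k+1))
      ((fun i => ((2*i+1 : ℕ) : ZMod (2*k+1))) '' Set.Icc 2 k) := by
    ext v
    simp only [Ud, Set.mem_setOf_eq, Set.mem_insert_iff, Set.mem_image, Set.mem_Icc]
    constructor
    · rintro (h | ⟨i, h1, h2, h3⟩)
      · exact Or.inl h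
      · exact Or.inr ⟨i, ⟨h1, h2⟩, h3.symm⟩
    · rintro (h | ⟨i, ⟨h1, h2⟩, h3⟩)
      · exact Or.inl h
      · exact Or.inr ⟨i, h1, h2, h3.symm⟩
  have hval : ∀ i : ℕ, i ∈ Set.Icc 2 k →
      (((2*i+1 : ℕ) : ZMod (2*k+1))).val = if 2*i+1 < 2*k+1 then 2*i+1 else 0 := by
    intro i hi
    rw [Set.mem_Icc] at hi
    rw [ZMod.val_natCast, mod_small (by omega) (by omega)]
    split_ifs <;> omega
  have hinj : Set.InjOn (fun i => ((2*i+1 : ℕ) : ZMod (2*k+1))) (Set.Icc 2 k) := by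
    intro i hi j hj h
    have h' := congrArg ZMod.val h
    simp only at h'
    rw [hval i hi, hval j hj] at h'
    rw [Set.mem_Icc] at hi hj
    split_ifs at h' <;> omega
  have hnm : ((2 : ℕ) : ZMod (2*k+1)) ∉
      (fun i => ((2*i+1 : ℕ) : ZMod (2*k+1))) '' Set.Icc 2 k := by
    rintro ⟨i, hi, h⟩
    have h' := congrArg ZMod.val h
    simp only at h'
    rw [hval i hi, val_cast' (by omega : 2 < 2*k+1)] at h'
    rw [Set.mem_Icc] at hi
    split_ifs at h' <;> omega
  rw [hUeq, Set.ncard_insert_of_notMem hnm ((Set.finite_Icc 2 k).image _),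
    Set.ncard_image_of_injOn hinj, ← Finset.coe_Icc, Set.ncard_coe_finset,
    Nat.card_Icc]
  omega

lemma main (hk : 3 ≤ k) :
    IsVertexCut (Gd' k) (Ud k) ∧ (Ud k).ncard = k ∧ numComp (Gd' k) (Ud k) = k - 1 ∧
      toughness (Gd' k) ≤ (k : ℝ) / ((k : ℝ) - 1) := by
  have hcomp := numComp_eq hk
  have hcard := ncard_U hk
  have hcut : IsVertexCut (Gd' k) (Ud k) := by
    unfold IsVertexCut; omega
  refine ⟨hcut, hcard, hcomp, ?_⟩
  have hb : BddBelow {x : ℝ | ∃ S : Set (ZMod (2*k+1)),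
      IsVertexCut (Gd' k) S ∧ x = (S.ncard : ℝ) / (numComp (Gd' k) S : ℝ)} := by
    refine ⟨0, ?_⟩
    rintro x ⟨S, -, rfl⟩
    positivity
  have hmem : (k : ℝ) / ((k : ℝ) - 1) ∈ {x : ℝ | ∃ S : Set (ZMod (2*k+1)),
      IsVertexCut (Gd' k) S ∧ x = (S.ncard : ℝ) / (numComp (Gd' k) S : ℝ)} := by
    refine ⟨Ud k, hcut, ?_⟩
    rw [hcard, hcomp, Nat.cast_sub (by omega), Nat.cast_one]
  exact csInf_le hb hmem

end Stmt6Aux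

theorem stmt6 (k : ℕ) (hk : 3 ≤ k) :
    let G := circGraph (2*k+1) {1, 3}
    let G' := G.deleteEdges {s(((1 : ℕ) : ZMod (2*k+1)), ((4 : ℕ) : ZMod (2*k+1)))}
    let U : Set (ZMod (2*k+1)) :=
      {v | v = ((2 : ℕ) : ZMod (2*k+1)) ∨
        ∃ i : ℕ, 2 ≤ i ∧ i ≤ k ∧ v = ((2*i+1 : ℕ) : ZMod (2*k+1))}
    IsVertexCut G' U ∧ U.ncard = k ∧ numComp G' U = k - 1 ∧
      toughness G' ≤ (k : ℝ) / ((k : ℝ) - 1) := by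
  intro G G' U
  exact Stmt6Aux.main hk
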